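/- For η ≥ 1, μ > 0, x > 0 and y > 0, the moments of the partial non-central chi-squared distribution satisfy the recurrence Q_{η,μ}(x,y) = Q_{η,μ+1}(x,y) − η·Q_{η-1,μ+1}(x,y) − (y/x)^{μ/2} · y^η · e^{-x-y} · I_μ(2√(xy)). -/

import Mathlib

open Real MeasureTheory

/-- Modified Bessel function of the first kind `I_ν(z)` via its Maclaurin series. -/
noncomputable def besselI (ν z : ℝ) : ℝ :=
  (z / 2) ^ ν * ∑' n : ℕ, (z ^ 2 / 4) ^ n / (n.factorial * Real.Gamma (ν + n + 1))

/-- Upper incomplete gamma function `Γ(a, y)`. -/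
noncomputable def uGamma (a y : ℝ) : ℝ := ∫ t in Set.Ioi y, t ^ (a - 1) * Real.exp (-t)

/-- Regularized upper incomplete gamma function `Q_a(y) = Γ(a,y)/Γ(a)`. -/
noncomputable def regQ (a y : ℝ) : ℝ := uGamma a y / Real.Gamma a

/-- η-th moment of the partial non-central chi-squared distribution (Nuttall Q-function). -/
noncomputable def nuttallQ (η μ x y : ℝ) : ℝ :=
  x ^ ((1 - μ) / 2) *
    ∫ t in Set.Ioi y, t ^ (η + (μ - 1) / 2) * Real.exp (-t - x) *
      besselI (μ - 1) (2 * Real.sqrt (x * t))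

/-- Generalized Marcum Q-function. -/
noncomputable def marcumQ (μ x y : ℝ) : ℝ := nuttallQ 0 μ x y

/-- Complementary Marcum function `P_μ(x,y)`. -/
noncomputable def marcumP (μ x y : ℝ) : ℝ :=
  x ^ ((1 - μ) / 2) *
    ∫ t in Set.Ioc 0 y, t ^ ((μ - 1) / 2) * Real.exp (-t - x) *
      besselI (μ - 1) (2 * Real.sqrt (x * t))


section NuttallAux
open Set Filter

lemma aux_integrable {a y : ℝ} (ha : 0 < a) (hy : 0 < y) :
    IntegrableOn (fun t => t ^ (a - 1) * Real.exp (-t)) (Set.Ioi y) := by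
  have h := (Real.GammaIntegral_convergent ha).mono_set (Set.Ioi_subset_Ioi hy.le)
  exact h.congr_fun (fun t _ => by ring) measurableSet_Ioi

lemma uGamma_nonneg {a y : ℝ} (hy : 0 ≤ y) : 0 ≤ uGamma a y := by
  apply integral_nonneg_of_ae
  filter_upwards [ae_restrict_mem measurableSet_Ioi] with t ht
  have : (0:ℝ) ≤ t := le_trans hy (le_of_lt ht)
  positivity

lemma uGamma_le_Gamma {a y : ℝ} (ha : 0 < a) (hy : 0 < y) : uGamma a y ≤ Real.Gamma a := by
  rw [Real.Gamma_eq_integral ha, uGamma]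
  have : ∀ t, t ^ (a-1) * Real.exp (-t) = Real.exp (-t) * t ^ (a-1) := fun t => by ring
  simp_rw [this]
  apply setIntegral_mono_set (Real.GammaIntegral_convergent ha)
  · filter_upwards [ae_restrict_mem measurableSet_Ioi] with t (ht : 0 < t)
    positivity
  · exact HasSubset.Subset.eventuallyLE (Set.Ioi_subset_Ioi hy.le)

lemma uGamma_succ {a y : ℝ} (ha : 0 < a) (hy : 0 < y) :
    uGamma (a + 1) y = a * uGamma a y + y ^ a * Real.exp (-y) := by
  have key : ∫ t in Set.Ioi y, (t ^ a * Real.exp (-t) - a * (t ^ (a-1) * Real.exp (-t)))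
      = (0:ℝ) - (-(y ^ a * Real.exp (-y))) := by
    apply integral_Ioi_of_hasDerivAt_of_tendsto' (f := fun t => -(t ^ a * Real.exp (-t)))
    · intro t ht
      have ht0 : (0:ℝ) < t := lt_of_lt_of_le hy ht
      have h1 : HasDerivAt (fun t : ℝ => t ^ a) (a * t ^ (a-1)) t :=
        Real.hasDerivAt_rpow_const (Or.inl ht0.ne')
      have h2 : HasDerivAt (fun t : ℝ => Real.exp (-t)) (-Real.exp (-t)) t := by
        simpa [Function.comp_def] using (Real.hasDerivAt_exp (-t)).comp t (hasDerivAt_neg t)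
      have := (h1.mul h2).neg
      convert this using 1
      · rfl
      · ring
    · apply Integrable.sub
      · have : IntegrableOn (fun t => t ^ ((a+1) - 1) * Real.exp (-t)) (Set.Ioi y) :=
          aux_integrable (by linarith) hy
        simpa using this.integrable
      · exact (aux_integrable ha hy).const_mul a
    · have h := tendsto_rpow_mul_exp_neg_mul_atTop_nhds_zero a 1 one_pos
      simp only [neg_mul, one_mul] at h
      simpa using h.neg
  have h1 : IntegrableOn (fun t => t ^ a * Real.exp (-t)) (Set.Ioi y) := by
    have : IntegrableOn (fun t => t ^ ((a+1) - 1) * Real.exp (-t)) (Set.Ioi y) :=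
      aux_integrable (by linarith) hy
    simpa using this
  have h2 : IntegrableOn (fun t => a * (t ^ (a-1) * Real.exp (-t))) (Set.Ioi y) :=
    (aux_integrable ha hy).const_mul a
  rw [integral_sub h1 h2, integral_const_mul] at key
  have : uGamma (a+1) y = ∫ t in Set.Ioi y, t ^ a * Real.exp (-t) := by
    unfold uGamma; norm_num
  rw [this]
  unfold uGamma
  linarith [key]

lemma Gamma_add_nat {s : ℝ} (hs : 0 < s) (m : ℕ) :
    Real.Gamma (s + m) = Real.Gamma s * ∏ k ∈ Finset.range m, (s + k) := by
  induction m with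
  | zero => simp
  | succ m ih =>
    have h0 : s + m ≠ 0 := by positivity
    have : (s : ℝ) + (m+1 : ℕ) = (s + m) + 1 := by push_cast; ring
    rw [this, Real.Gamma_add_one h0, ih, Finset.prod_range_succ]
    ring

lemma summable_main {b ν r : ℝ} (hb : 0 ≤ b) (hν : 0 < ν) (hr : 0 ≤ r) :
    Summable (fun n : ℕ => r ^ n / (n.factorial * Real.Gamma (ν + n)) * Real.Gamma (b + ν + n)) := by
  set m : ℕ := ⌈b⌉₊ with hm
  have hbm : b ≤ m := Nat.le_ceil b
  apply Summable.of_norm_bounded_eventually_nat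
    (g := fun n => (ν + m + 1) ^ m * ((2 ^ m * r) ^ n / n.factorial))
  · exact ((Real.summable_pow_div_factorial _).mul_left _)
  · filter_upwards [eventually_ge_atTop 2] with n hn
    have hn2 : (2:ℝ) ≤ n := by exact_mod_cast hn
    have hΓν : 0 < Real.Gamma (ν + n) := Real.Gamma_pos_of_pos (by positivity)
    have hΓb : 0 < Real.Gamma (b + ν + n) := Real.Gamma_pos_of_pos (by positivity)
    have hterm : (0:ℝ) ≤ r ^ n / (n.factorial * Real.Gamma (ν + n)) * Real.Gamma (b + ν + n) := by
      positivity
    rw [Real.norm_of_nonneg hterm]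
    have hmono : Real.Gamma (b + ν + n) ≤ Real.Gamma ((ν + n) + m) := by
      rcases eq_or_lt_of_le (by linarith [hbm] : b + ν + n ≤ (ν + n) + m) with h | h
      · rw [h]
      · exact le_of_lt (Real.Gamma_strictMonoOn_Ici (by simp only [Set.mem_Ici]; linarith)
          (by simp only [Set.mem_Ici]; linarith) h)
    have h2n : (n:ℝ) + 1 ≤ 2 ^ n := by exact_mod_cast Nat.lt_two_pow_self
    have hprod : Real.Gamma ((ν + n) + m)
        ≤ Real.Gamma (ν + n) * ((ν + m + 1) ^ m * (2 ^ m) ^ n) := by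
      rw [Gamma_add_nat (by positivity)]
      apply mul_le_mul_of_nonneg_left _ hΓν.le
      have hstep : ∏ k ∈ Finset.range m, (ν + (n:ℝ) + k)
          ≤ ∏ _k ∈ Finset.range m, ((ν + m + 1) * 2 ^ n) := by
        apply Finset.prod_le_prod
        · intro k _; positivity
        · intro k hk
          have hk' : (k:ℝ) ≤ m := by exact_mod_cast (Finset.mem_range.mp hk).le
          have h3 : (ν + (m:ℝ) + 1) * ((n:ℝ) + 1) ≤ (ν + m + 1) * 2 ^ n :=
            mul_le_mul_of_nonneg_left h2n (by positivity)
          nlinarith [mul_nonneg hν.le (Nat.cast_nonneg (α := ℝ) n),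
            mul_nonneg (Nat.cast_nonneg (α := ℝ) m) (Nat.cast_nonneg (α := ℝ) n)]
      refine hstep.trans (le_of_eq ?_)
      rw [Finset.prod_const, Finset.card_range, mul_pow, ← pow_mul, ← pow_mul, mul_comm n m]
    have := mul_le_mul_of_nonneg_left (hmono.trans hprod)
      (by positivity : (0:ℝ) ≤ r ^ n / (n.factorial * Real.Gamma (ν + n)))
    refine this.trans (le_of_eq ?_)
    rw [mul_pow]
    field_simp

lemma summable_inv {ν r : ℝ} (hν : 0 < ν) (hr : 0 ≤ r) :
    Summable (fun n : ℕ => r ^ n / (n.factorial * Real.Gamma (ν + n))) := by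
  apply Summable.of_norm_bounded_eventually_nat (g := fun n => r ^ n / n.factorial)
    (Real.summable_pow_div_factorial r)
  filter_upwards [eventually_ge_atTop 2] with n hn
  have hn2 : (2:ℝ) ≤ n := by exact_mod_cast hn
  have hΓ1 : (1:ℝ) ≤ Real.Gamma (ν + n) := by
    rw [← Real.Gamma_two]
    exact Real.Gamma_strictMonoOn_Ici.monotoneOn (by simp) (by simp only [Set.mem_Ici]; linarith)
      (by linarith)
  have hΓν : 0 < Real.Gamma (ν + n) := by linarith
  have hfac : (0:ℝ) < n.factorial := by positivity
  rw [Real.norm_of_nonneg (by positivity)]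
  apply div_le_div_of_nonneg_left (by positivity) hfac
  nlinarith

lemma besselI_sqrt {μ u : ℝ} (hu : 0 < u) :
    besselI (μ - 1) (2 * Real.sqrt u)
      = u ^ ((μ - 1) / 2) * ∑' n : ℕ, u ^ n / (n.factorial * Real.Gamma (μ + n)) := by
  unfold besselI
  have h1 : 2 * Real.sqrt u / 2 = Real.sqrt u := by ring
  have h2 : (2 * Real.sqrt u) ^ 2 / 4 = u := by
    rw [mul_pow, Real.sq_sqrt hu.le]; ring
  rw [h1, h2, Real.sqrt_eq_rpow, ← Real.rpow_mul hu.le]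
  congr 1
  · congr 1; ring
  · apply tsum_congr; intro n
    have h3 : μ - 1 + (n : ℝ) + 1 = μ + n := by ring
    rw [h3]

lemma nuttallQ_eq_tsum {η μ x y : ℝ} (hη : 0 ≤ η) (hμ : 0 < μ) (hx : 0 < x) (hy : 0 < y) :
    nuttallQ η μ x y = Real.exp (-x) * ∑' n : ℕ,
      x ^ n / (n.factorial * Real.Gamma (μ + n)) * uGamma (η + μ + n) y := by
  set g : ℕ → ℝ → ℝ := fun n t =>
    Real.exp (-x) * x ^ ((μ - 1) / 2) * (x ^ n / (n.factorial * Real.Gamma (μ + n))) *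
      (t ^ (η + μ + n - 1) * Real.exp (-t)) with hg
  have hpos : ∀ n : ℕ, (0:ℝ) < η + μ + n := fun n => by positivity
  have hΓ : ∀ n : ℕ, (0:ℝ) < Real.Gamma (μ + n) :=
    fun n => Real.Gamma_pos_of_pos (by positivity)
  have hpt : ∀ t ∈ Set.Ioi y, t ^ (η + (μ - 1) / 2) * Real.exp (-t - x) *
      besselI (μ - 1) (2 * Real.sqrt (x * t)) = ∑' n, g n t := by
    intro t ht
    have ht0 : 0 < t := hy.trans ht
    have hxt : 0 < x * t := mul_pos hx ht0
    rw [besselI_sqrt (μ := μ) hxt, Real.mul_rpow hx.le ht0.le, ← tsum_mul_left, ← tsum_mul_left]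
    apply tsum_congr; intro n
    have e1 : Real.exp (-t - x) = Real.exp (-t) * Real.exp (-x) := by
      rw [← Real.exp_add]; ring_nf
    have ht1 : t ^ (η + (μ - 1) / 2) * t ^ ((μ - 1) / 2) * (t : ℝ) ^ (n : ℕ)
        = t ^ (η + μ + n - 1) := by
      rw [← Real.rpow_natCast t n, ← Real.rpow_add ht0, ← Real.rpow_add ht0]
      congr 1; ring
    simp only [hg]
    rw [e1, ← ht1, mul_pow]
    ring
  have hint : ∀ n : ℕ, IntegrableOn (g n) (Set.Ioi y) := by
    intro n
    exact (aux_integrable (hpos n) hy).const_mul _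
  have hnorm : ∀ n : ℕ, (∫ t in Set.Ioi y, ‖g n t‖)
      = Real.exp (-x) * x ^ ((μ - 1) / 2) * (x ^ n / (n.factorial * Real.Gamma (μ + n))) *
        uGamma (η + μ + n) y := by
    intro n
    rw [uGamma, ← MeasureTheory.integral_const_mul]
    apply setIntegral_congr_fun measurableSet_Ioi
    intro t ht
    have ht0 : (0:ℝ) ≤ t := (hy.trans ht).le
    have hΓn := hΓ n
    simp only [hg]
    exact Real.norm_of_nonneg (by positivity)
  have hsum : Summable (fun n : ℕ => ∫ t in Set.Ioi y, ‖g n t‖) := by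
    simp_rw [hnorm]
    have hS : Summable (fun n : ℕ => (Real.exp (-x) * x ^ ((μ - 1) / 2)) *
        (x ^ n / (n.factorial * Real.Gamma (μ + n)) * Real.Gamma (η + μ + n))) :=
      (summable_main hη hμ hx.le).mul_left _
    refine Summable.of_nonneg_of_le (fun n => ?_) (fun n => ?_) hS
    · have hΓn := hΓ n
      have h0 := uGamma_nonneg (a := η + μ + n) hy.le
      positivity
    · have h1 : uGamma (η + μ + n) y ≤ Real.Gamma (η + μ + n) :=
        uGamma_le_Gamma (hpos n) hy
      have hΓn := hΓ n
      have h2 := mul_le_mul_of_nonneg_left h1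
        (by positivity : (0:ℝ) ≤ Real.exp (-x) * x ^ ((μ - 1) / 2) *
          (x ^ n / (n.factorial * Real.Gamma (μ + n))))
      exact h2.trans (le_of_eq (by ring))
  have hswap := MeasureTheory.integral_tsum_of_summable_integral_norm
    (μ := volume.restrict (Set.Ioi y)) hint hsum
  unfold nuttallQ
  rw [setIntegral_congr_fun measurableSet_Ioi hpt, ← hswap]
  have hval : ∀ n : ℕ, (∫ t in Set.Ioi y, g n t) = (Real.exp (-x) * x ^ ((μ - 1) / 2)) *
      (x ^ n / (n.factorial * Real.Gamma (μ + n)) * uGamma (η + μ + n) y) := by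
    intro n
    simp only [hg]
    rw [MeasureTheory.integral_const_mul, uGamma]
    ring
  rw [tsum_congr hval, tsum_mul_left, ← mul_assoc]
  have hxx : x ^ ((1 - μ) / 2) * (Real.exp (-x) * x ^ ((μ - 1) / 2)) = Real.exp (-x) := by
    rw [mul_comm (Real.exp (-x)) _, ← mul_assoc, ← Real.rpow_add hx,
      show (1 - μ) / 2 + (μ - 1) / 2 = 0 by ring, Real.rpow_zero, one_mul]
  rw [hxx]

lemma summable_A {b ν x y : ℝ} (hb : 0 ≤ b) (hν : 0 < ν) (hx : 0 ≤ x) (hy : 0 < y) :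
    Summable (fun n : ℕ => x ^ n / (n.factorial * Real.Gamma (ν + n)) * uGamma (b + ν + n) y) := by
  refine Summable.of_nonneg_of_le (fun n => ?_) (fun n => ?_) (summable_main hb hν hx)
  · have hΓn : 0 < Real.Gamma (ν + n) := Real.Gamma_pos_of_pos (by positivity)
    have h0 := uGamma_nonneg (a := b + ν + n) hy.le
    positivity
  · have hΓn : 0 < Real.Gamma (ν + n) := Real.Gamma_pos_of_pos (by positivity)
    exact mul_le_mul_of_nonneg_left (uGamma_le_Gamma (by positivity) hy) (by positivity)

theorem nuttallQ_recurrence (η μ x y : ℝ) (hη : 1 ≤ η) (hμ : 0 < μ) (hx : 0 < x) (hy : 0 < y) :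
    nuttallQ η μ x y =
      nuttallQ η (μ + 1) x y - η * nuttallQ (η - 1) (μ + 1) x y -
        (y / x) ^ (μ / 2) * y ^ η * Real.exp (-x - y) * besselI μ (2 * Real.sqrt (x * y)) := by
  have hη0 : (0:ℝ) ≤ η := by linarith
  have hη1 : (0:ℝ) ≤ η - 1 := by linarith
  have hμ1 : (0:ℝ) < μ + 1 := by linarith
  -- Bessel term
  have hT : (y / x) ^ (μ / 2) * y ^ η * Real.exp (-x - y) * besselI μ (2 * Real.sqrt (x * y))
      = Real.exp (-x) * (Real.exp (-y) * y ^ (η + μ) *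
          ∑' n : ℕ, (x * y) ^ n / (n.factorial * Real.Gamma (μ + 1 + n))) := by
    have hb := besselI_sqrt (μ := μ + 1) (mul_pos hx hy)
    rw [show μ + 1 - 1 = μ by ring] at hb
    rw [hb]
    have h1 : (y / x) ^ (μ / 2) * (x * y) ^ (μ / 2) = y ^ μ := by
      rw [← Real.mul_rpow (by positivity) (by positivity),
          show y / x * (x * y) = y ^ 2 by field_simp,
          ← Real.rpow_natCast y 2, ← Real.rpow_mul hy.le]
      norm_num
      rw [show (2:ℝ) * (μ / 2) = μ by ring]
    have h2 : y ^ η * y ^ μ = y ^ (η + μ) := (Real.rpow_add hy η μ).symm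
    have h3 : Real.exp (-x - y) = Real.exp (-x) * Real.exp (-y) := by
      rw [← Real.exp_add]; ring_nf
    rw [h3, ← h2, ← h1]
    ring
  rw [nuttallQ_eq_tsum hη0 hμ hx hy, nuttallQ_eq_tsum hη0 hμ1 hx hy,
      nuttallQ_eq_tsum hη1 hμ1 hx hy, hT]
  -- summabilities
  have hA : Summable (fun n : ℕ =>
      x ^ n / (n.factorial * Real.Gamma (μ + 1 + n)) * uGamma (η + μ + n) y) := by
    refine (summable_A hη1 hμ1 hx.le hy).congr (fun n => ?_)
    rw [show η - 1 + (μ + 1) + (n:ℝ) = η + μ + n by ring]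
  have hC : Summable (fun n : ℕ => (x * y) ^ n / (n.factorial * Real.Gamma (μ + 1 + n))) :=
    summable_inv hμ1 (by positivity)
  have hA' : Summable (fun n : ℕ =>
      x ^ n / (n.factorial * Real.Gamma (μ + n)) * uGamma (η + μ + n) y) :=
    summable_A hη0 hμ hx.le hy
  -- per-term identity
  have key : ∀ n : ℕ, x ^ n / (n.factorial * Real.Gamma (μ + 1 + n)) * uGamma (η + (μ + 1) + n) y
      = x ^ n / (n.factorial * Real.Gamma (μ + n)) * uGamma (η + μ + n) y
        + (η * (x ^ n / (n.factorial * Real.Gamma (μ + 1 + n)) * uGamma (η + μ + n) y)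
          + (Real.exp (-y) * y ^ (η + μ)) *
            ((x * y) ^ n / (n.factorial * Real.Gamma (μ + 1 + n)))) := by
    intro n
    have hμn : (0:ℝ) < μ + n := by positivity
    have hΓ : 0 < Real.Gamma (μ + n) := Real.Gamma_pos_of_pos hμn
    have hΓ1 : Real.Gamma (μ + 1 + n) = (μ + n) * Real.Gamma (μ + n) := by
      rw [show μ + 1 + (n:ℝ) = (μ + n) + 1 by ring, Real.Gamma_add_one hμn.ne']
    have hrec : uGamma (η + (μ + 1) + n) y
        = (η + μ + n) * uGamma (η + μ + n) y + y ^ (η + μ + n) * Real.exp (-y) := by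
      rw [show η + (μ + 1) + (n:ℝ) = (η + μ + n) + 1 by ring]
      exact uGamma_succ (by positivity) hy
    have hyn : y ^ (η + μ + (n:ℝ)) = y ^ (η + μ) * y ^ n := by
      rw [Real.rpow_add hy, Real.rpow_natCast]
    have hfac : ((n.factorial : ℝ)) ≠ 0 := by positivity
    rw [hrec, hΓ1, hyn, mul_pow]
    field_simp
    ring
  rw [tsum_congr key, Summable.tsum_add hA' ((hA.mul_left η).add (hC.mul_left _)),
      Summable.tsum_add (hA.mul_left η) (hC.mul_left _), tsum_mul_left, tsum_mul_left]
  have hidx : (∑' n : ℕ, x ^ n / (n.factorial * Real.Gamma (μ + 1 + n)) *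
      uGamma (η - 1 + (μ + 1) + n) y)
      = ∑' n : ℕ, x ^ n / (n.factorial * Real.Gamma (μ + 1 + n)) * uGamma (η + μ + n) y :=
    tsum_congr fun n => by rw [show η - 1 + (μ + 1) + (n:ℝ) = η + μ + n by ring]
  rw [hidx]
  ring

end NuttallAux
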